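/- Let s, a : Fin c → ℝ be monotone nondecreasing (sorted cost lists of length c). Define the multiset T of all sums s(i) + a(k) for pairs with (i+1)·(k+1) ≤ c (1-indexed product at most c). Then T contains the c smallest elements of the full multiset {s(i) + a(k) : i, k ∈ Fin c}; that is, every element of the full multiset that is strictly smaller than the maximum of the c smallest elements appears in T with at least the same multiplicity. -/

import Mathlib

open Finset in
/-- Auxiliary: if at least `m` elements of `M` are `≤ v`, then the `m`-th
smallest element of `M` (0-indexed `m-1` in the sorted list) is `≤ v`. -/
theorem sorted_getD_le_of_many_le (M : Multiset ℝ) (v : ℝ) (m : ℕ) (hm : 0 < m)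
    (hcard : m ≤ Multiset.card (M.filter (· ≤ v))) :
    (M.sort (· ≤ ·)).getD (m - 1) 0 ≤ v := by
  by_contra hlt
  push_neg at hlt
  set L := M.sort (· ≤ ·) with hL
  have hsorted : L.Pairwise (· ≤ ·) := M.pairwise_sort _
  have hML : (L : Multiset ℝ) = M := M.sort_eq _
  have hlen : Multiset.card (M.filter (· ≤ v)) ≤ L.length := by
    rw [Multiset.length_sort]
    exact Multiset.card_le_card (Multiset.filter_le _ _)
  have hmlen : m - 1 < L.length := by omega
  have ht : L.getD (m - 1) 0 = L.get ⟨m - 1, hmlen⟩ := List.getD_eq_get (l := L) (d := 0) ⟨m - 1, hmlen⟩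
  rw [ht] at hlt
  -- every element of L at index ≥ m-1 is > v
  have key : ∀ j : Fin L.length, (m - 1 : ℕ) ≤ (j : ℕ) → v < L.get j := by
    intro j hj
    exact lt_of_lt_of_le hlt (hsorted.rel_get_of_le (by exact hj))
  -- so filter (· ≤ v) L is contained in the first m-1 elements
  have hfil : (L.filter (fun y => decide (y ≤ v))).length ≤ m - 1 := by
    have hsplit : L = L.take (m - 1) ++ L.drop (m - 1) := (List.take_append_drop _ _).symm
    have hdrop : (L.drop (m - 1)).filter (fun y => decide (y ≤ v)) = [] := by
      rw [List.filter_eq_nil_iff]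
      intro b hb
      obtain ⟨j, hjlen, hjget⟩ := List.getElem_of_mem hb
      rw [List.getElem_drop] at hjget
      have : v < L.get ⟨m - 1 + j, by
          have := List.length_drop ▸ hjlen; omega⟩ :=
        key _ (Nat.le_add_right _ _)
      simp only [List.get_eq_getElem] at this
      rw [hjget] at this
      simp [not_le.mpr this]
    calc (L.filter (fun y => decide (y ≤ v))).length
        = ((L.take (m - 1)).filter _ ++ (L.drop (m - 1)).filter _).length := by
          conv_lhs => rw [hsplit]
          rw [List.filter_append]
      _ = ((L.take (m - 1)).filter (fun y => decide (y ≤ v))).length := by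
          rw [hdrop, List.append_nil]
      _ ≤ (L.take (m - 1)).length := List.length_filter_le _ _
      _ ≤ m - 1 := by simp
  have : Multiset.card (M.filter (· ≤ v)) ≤ m - 1 := by
    rw [← hML]
    simpa [Multiset.filter_coe] using hfil
  omega

open Finset in
/-- For sorted cost lists `s` and `a` of length `c`, every sum `s i + a k`
strictly smaller than the `c`-th smallest of all `c²` combined sums occurs,
with at least the same multiplicity, among the pairs whose 1-indexed index
product is at most `c`: the `c` smallest combined sums are found in `T`. -/
theorem top_c_combinations {c : ℕ} (hc : 0 < c) (s a : Fin c → ℝ)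
    (hs : Monotone s) (ha : Monotone a) :
    let F : Multiset ℝ := (univ : Finset (Fin c × Fin c)).val.map (fun p => s p.1 + a p.2)
    let T : Multiset ℝ := ((univ : Finset (Fin c × Fin c)).filter
        (fun p => (p.1.val + 1) * (p.2.val + 1) ≤ c)).val.map (fun p => s p.1 + a p.2)
    ∀ x : ℝ, x < (F.sort (· ≤ ·)).getD (c - 1) 0 → F.count x ≤ T.count x := by
  intro F T x hx
  set t := (F.sort (· ≤ ·)).getD (c - 1) 0 with ht
  -- split F into T and its complement
  set P : Fin c × Fin c → Prop := fun p => (p.1.val + 1) * (p.2.val + 1) ≤ c with hP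
  have hsplit : F = T + ((univ : Finset (Fin c × Fin c)).val.filter (fun p => ¬ P p)).map
      (fun p => s p.1 + a p.2) := by
    simp only [F, T, Finset.filter_val]
    rw [← Multiset.map_add, Multiset.filter_add_not]
  -- every element of the complement has value ≥ t
  have hbig : ∀ p : Fin c × Fin c, ¬ P p → t ≤ s p.1 + a p.2 := by
    intro p hp
    apply sorted_getD_le_of_many_le F (s p.1 + a p.2) c hc
    -- count the pairs in Iic p, each has sum ≤ s p.1 + a p.2
    have hsub : Finset.Iic p ⊆ Finset.filter (fun q => s q.1 + a q.2 ≤ s p.1 + a p.2) univ := by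
      intro q hq
      simp only [Finset.mem_Iic] at hq
      simp only [Finset.mem_filter, Finset.mem_univ, true_and]
      exact add_le_add (hs hq.1) (ha hq.2)
    have hcardIic : (Finset.Iic p).card = (p.1.val + 1) * (p.2.val + 1) := by
      rw [Finset.card_Iic_prod, Fin.card_Iic, Fin.card_Iic]
    have hcount : Multiset.card (F.filter (· ≤ s p.1 + a p.2))
        = (Finset.filter (fun q => s q.1 + a q.2 ≤ s p.1 + a p.2) (univ : Finset (Fin c × Fin c))).card := by
      simp only [F]
      rw [Multiset.filter_map, Multiset.card_map]
      rfl
    rw [hcount]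
    calc c ≤ (p.1.val + 1) * (p.2.val + 1) := by
            simp only [hP, not_le] at hp; omega
      _ = (Finset.Iic p).card := hcardIic.symm
      _ ≤ _ := Finset.card_le_card hsub
  -- conclude
  rw [hsplit, Multiset.count_add]
  have hzero : Multiset.count x (((univ : Finset (Fin c × Fin c)).val.filter
      (fun p => ¬ P p)).map (fun p => s p.1 + a p.2)) = 0 := by
    rw [Multiset.count_eq_zero]
    intro hmem
    obtain ⟨p, hpmem, hpeq⟩ := Multiset.mem_map.mp hmem
    have hp := (Multiset.mem_filter.mp hpmem).2
    have := hbig p hp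
    rw [hpeq] at this
    exact absurd hx (not_lt.mpr this)
  omega
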